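/- With A, O, D as above (|A| = |D| = 1, angle AOD = π/6, O the origin), define for each j ∈ ℕ the segments I_j^k = {x ∈ 6·Δ(AOD) : φ_x = k·(2π)^{-j}·π/6, |x| ∈ [2^{-j}, 11·2^{-j}]} for k = 1, …, k_j where k_j = ⌊(2π)^j⌋. Then every curve γ joining A and D, whose interior points lie in the interior of 4·Δ(AOD) and which is disjoint from every segment I_j^k, has length l(γ) ≥ 6. -/

import Mathlib

set_option maxHeartbeats 1600000

open Set Real

section Stmt6Aux

open InnerProductGeometry
open scoped RealInnerProductSpace

private lemma stmt6_exists_firstHit {θ : ℝ → ℝ} {a b : ℝ} (hab : a ≤ b)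
    (hθ : ContinuousOn θ (Icc a b)) {v : ℝ} (h1 : θ a ≤ v) (h2 : v ≤ θ b) :
    ∃ τ ∈ Icc a b, θ τ = v ∧ ∀ t ∈ Icc a b, θ t = v → τ ≤ t := by
  set S : Set ℝ := {t | t ∈ Icc a b ∧ θ t = v} with hS
  have hSne : S.Nonempty := by
    obtain ⟨t, ht, htv⟩ := intermediate_value_Icc hab hθ ⟨h1, h2⟩
    exact ⟨t, ht, htv⟩
  have hSclosed : IsClosed S := by
    have : S = Icc a b ∩ θ ⁻¹' {v} := by
      ext t; simp [hS, Set.mem_inter_iff]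
    rw [this]
    exact hθ.preimage_isClosed_of_isClosed isClosed_Icc isClosed_singleton
  have hbdd : BddBelow S := ⟨a, fun t ht => ht.1.1⟩
  have hmem : sInf S ∈ S := hSclosed.csInf_mem hSne hbdd
  exact ⟨sInf S, hmem.1, hmem.2, fun t ht htv => csInf_le hbdd ⟨ht, htv⟩⟩

private lemma stmt6_spike_bound {E : Type*} [PseudoEMetricSpace E]
    (γ : ℝ → E) {p τ q : ℝ} (h1 : p ≤ τ) (h2 : τ ≤ q) :
    edist (γ p) (γ τ) + edist (γ τ) (γ q) ≤ eVariationOn γ (Icc p q) := by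
  have A := eVariationOn.edist_le γ (x := p) (y := τ)
    (show p ∈ Icc p τ by simp [h1]) (by simp [h1])
  have B := eVariationOn.edist_le γ (x := τ) (y := q)
    (show τ ∈ Icc τ q by simp [h2]) (by simp [h2])
  calc edist (γ p) (γ τ) + edist (γ τ) (γ q)
      ≤ eVariationOn γ (Icc p τ) + eVariationOn γ (Icc τ q) := add_le_add A B
    _ = eVariationOn γ (univ ∩ Icc p τ) + eVariationOn γ (univ ∩ Icc τ q) := by
        simp [Set.univ_inter]
    _ = eVariationOn γ (univ ∩ Icc p q) := eVariationOn.Icc_add_Icc γ h1 h2 (mem_univ τ)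
    _ = eVariationOn γ (Icc p q) := by simp [Set.univ_inter]

private lemma stmt6_split_bound {E : Type*} [PseudoEMetricSpace E]
    (γ : ℝ → E) {p τ q : ℝ} (h1 : p ≤ τ) (h2 : τ ≤ q) :
    eVariationOn γ (Icc p τ) + eVariationOn γ (Icc τ q) ≤ eVariationOn γ (Icc p q) := by
  have := eVariationOn.Icc_add_Icc γ (s := univ) h1 h2 (mem_univ τ)
  simp only [Set.univ_inter] at this
  rw [← this]

private lemma stmt6_edist_ge (γ : ℝ → EuclideanSpace ℝ (Fin 2)) (p τ : ℝ) {c : ℝ}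
    (h : c ≤ ‖γ τ‖ - ‖γ p‖) : ENNReal.ofReal c ≤ edist (γ p) (γ τ) := by
  rw [edist_dist]
  apply ENNReal.ofReal_le_ofReal
  have h1 : |‖γ p‖ - ‖γ τ‖| ≤ ‖γ p - γ τ‖ := abs_norm_sub_norm_le _ _
  have h2 : ‖γ τ‖ - ‖γ p‖ ≤ |‖γ p‖ - ‖γ τ‖| := by
    rw [abs_sub_comm]; exact le_abs_self _
  rw [dist_eq_norm]
  linarith

/-- the key multiscale statement proved at scale `j`: between two times at which the
curve has small norm and whose angles are at least three scale-`j` angular steps apart,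
the variation is at least `18 * 2⁻ʲ`. -/
private def GapStmt (γ : ℝ → EuclideanSpace ℝ (Fin 2)) (θ : ℝ → ℝ) (j : ℕ) : Prop :=
  ∀ p q : ℝ, p ∈ Icc (0:ℝ) 1 → q ∈ Icc (0:ℝ) 1 →
    p ≤ q → 0 ≤ θ p → θ q ≤ 1/4 →
    θ p + 3 * ((2*π)^(-(j:ℤ)) * (π/6)) ≤ θ q →
    ‖γ p‖ < 2 * (2:ℝ)^(-(j:ℤ)) → ‖γ q‖ < 2 * (2:ℝ)^(-(j:ℤ)) →
    ENNReal.ofReal (18 * (2:ℝ)^(-(j:ℤ))) ≤ eVariationOn γ (Icc p q)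

private lemma stmt6_gap_step (γ : ℝ → EuclideanSpace ℝ (Fin 2)) (θ : ℝ → ℝ) (J : ℕ)
    (hθ : ContinuousOn θ (Icc 0 1))
    (hEvent : ∀ t ∈ Icc (0:ℝ) 1, ∀ j k : ℕ, 2 ≤ j → 1 ≤ k →
      θ t = (k : ℝ) * (2*π)^(-(j:ℤ)) * (π/6) → θ t ≤ 1/4 →
      ‖γ t‖ < (2:ℝ)^(-(j:ℤ)) ∨ 11 * (2:ℝ)^(-(j:ℤ)) < ‖γ t‖)
    (hJ : ∀ t ∈ Icc (0:ℝ) 1, (2:ℝ)^(-(J:ℤ)) ≤ ‖γ t‖)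
    (j : ℕ) (hj : 2 ≤ j)
    (hIH : J ≤ j ∨ GapStmt γ θ (j+1)) :
    GapStmt γ θ j := by
  intro p q hp hq hpq hθp hθq hsep hγp hγq
  have hπ : (3.14:ℝ) < π := by have := Real.pi_gt_d6; linarith
  set σ : ℝ := (2*π)^(-(j:ℤ)) * (π/6) with hσdef
  have h2π : (0:ℝ) < 2*π := by linarith
  have hzp : (0:ℝ) < (2*π)^(-(j:ℤ)) := zpow_pos h2π _
  have hσpos : 0 < σ := by rw [hσdef]; positivity
  have h2jpos : (0:ℝ) < (2:ℝ)^(-(j:ℤ)) := zpow_pos two_pos _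
  set k : ℕ := ⌊θ p / σ⌋₊ + 1 with hkdef
  have hkcast : (k:ℝ) = (⌊θ p / σ⌋₊ : ℝ) + 1 := by rw [hkdef]; push_cast; ring
  have hk1 : θ p < (k:ℝ) * σ := by
    have h := Nat.lt_floor_add_one (θ p / σ)
    rw [div_lt_iff₀ hσpos] at h
    rw [hkcast]; linarith
  have hk2 : (k:ℝ) * σ ≤ θ p + σ := by
    have h := Nat.floor_le (show 0 ≤ θ p / σ from div_nonneg hθp hσpos.le)
    have h' : (⌊θ p / σ⌋₊ : ℝ) * σ ≤ θ p := by
      rw [← le_div_iff₀ hσpos]; exact h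
    rw [hkcast]; nlinarith
  set vv : ℕ → ℝ := fun i => ((k+i:ℕ):ℝ) * σ with hvvdef
  have hvvc : ∀ i : ℕ, vv i = ((k:ℝ) + i) * σ := by intro i; rw [hvvdef]; push_cast; ring
  have hvlb : ∀ i : ℕ, θ p ≤ vv i := by
    intro i
    rw [hvvc]
    have : (0:ℝ) ≤ i := Nat.cast_nonneg i
    nlinarith
  have hvub : ∀ i : ℕ, i ≤ 2 → vv i ≤ θ q := by
    intro i hi
    rw [hvvc]
    have : (i:ℝ) ≤ 2 := by exact_mod_cast hi
    nlinarith
  have hsub : Icc p q ⊆ Icc (0:ℝ) 1 := Icc_subset_Icc hp.1 hq.2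
  have hθpq : ContinuousOn θ (Icc p q) := hθ.mono hsub
  obtain ⟨τ0, hτ0m, hτ0v, hτ0min⟩ :=
    stmt6_exists_firstHit hpq hθpq (hvlb 0) (hvub 0 (by norm_num))
  obtain ⟨τ1, hτ1m, hτ1v, hτ1min⟩ :=
    stmt6_exists_firstHit hpq hθpq (hvlb 1) (hvub 1 (by norm_num))
  obtain ⟨τ2, hτ2m, hτ2v, hτ2min⟩ :=
    stmt6_exists_firstHit hpq hθpq (hvlb 2) (hvub 2 (by norm_num))
  have hvmono : ∀ i i' : ℕ, i ≤ i' → vv i ≤ vv i' := by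
    intro i i' hii
    rw [hvvc, hvvc]
    have : (i:ℝ) ≤ i' := by exact_mod_cast hii
    nlinarith
  have horder : ∀ (i : ℕ) (τ τ' : ℝ), τ' ∈ Icc p q → θ τ' = vv (i+1) →
      (∀ t ∈ Icc p q, θ t = vv i → τ ≤ t) → τ ≤ τ' := by
    intro i τ τ' hτ'm hτ'v hmin
    obtain ⟨t, htm, htv⟩ := intermediate_value_Icc hτ'm.1
      (hθpq.mono (Icc_subset_Icc le_rfl hτ'm.2))
      ⟨hvlb i, by rw [hτ'v]; exact hvmono i (i+1) (by omega)⟩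
    exact (hmin t ⟨htm.1, htm.2.trans hτ'm.2⟩ htv).trans htm.2
  have hτ01 : τ0 ≤ τ1 := horder 0 τ0 τ1 hτ1m hτ1v hτ0min
  have hτ12 : τ1 ≤ τ2 := horder 1 τ1 τ2 hτ2m hτ2v hτ1min
  have hev : ∀ (i : ℕ), i ≤ 2 → ∀ τ : ℝ, τ ∈ Icc p q → θ τ = vv i →
      ‖γ τ‖ < (2:ℝ)^(-(j:ℤ)) ∨ 11 * (2:ℝ)^(-(j:ℤ)) < ‖γ τ‖ := by
    intro i hi τ hτm hτv
    apply hEvent τ (hsub hτm) j (k+i) hj (by omega)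
    · rw [hτv, hvvdef]; push_cast; rw [hσdef]; ring
    · rw [hτv]
      exact (hvmono i 2 hi).trans ((hvub 2 (by norm_num)).trans hθq)
  have highdone : ∀ τ : ℝ, τ ∈ Icc p q → 11 * (2:ℝ)^(-(j:ℤ)) < ‖γ τ‖ →
      ENNReal.ofReal (18 * (2:ℝ)^(-(j:ℤ))) ≤ eVariationOn γ (Icc p q) := by
    intro τ hτm hhigh
    have e1 : ENNReal.ofReal (9 * (2:ℝ)^(-(j:ℤ))) ≤ edist (γ p) (γ τ) :=
      stmt6_edist_ge γ p τ (by linarith)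
    have e2 : ENNReal.ofReal (9 * (2:ℝ)^(-(j:ℤ))) ≤ edist (γ τ) (γ q) := by
      rw [edist_comm]
      exact stmt6_edist_ge γ q τ (by linarith)
    calc ENNReal.ofReal (18 * (2:ℝ)^(-(j:ℤ)))
        = ENNReal.ofReal (9 * (2:ℝ)^(-(j:ℤ)) + 9 * (2:ℝ)^(-(j:ℤ))) := by ring_nf
      _ ≤ ENNReal.ofReal (9 * (2:ℝ)^(-(j:ℤ))) + ENNReal.ofReal (9 * (2:ℝ)^(-(j:ℤ))) :=
          ENNReal.ofReal_add_le
      _ ≤ edist (γ p) (γ τ) + edist (γ τ) (γ q) := add_le_add e1 e2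
      _ ≤ eVariationOn γ (Icc p q) := stmt6_spike_bound γ hτm.1 hτm.2
  rcases hev 0 (by norm_num) τ0 hτ0m hτ0v with hlow0 | hhigh0
  swap
  · exact highdone τ0 hτ0m hhigh0
  rcases hev 1 (by norm_num) τ1 hτ1m hτ1v with hlow1 | hhigh1
  swap
  · exact highdone τ1 hτ1m hhigh1
  rcases hev 2 (by norm_num) τ2 hτ2m hτ2v with hlow2 | hhigh2
  swap
  · exact highdone τ2 hτ2m hhigh2
  rcases hIH with hJj | hIH
  · exfalso
    have h1 := hJ τ0 (hsub hτ0m)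
    have h2 : (2:ℝ)^(-(j:ℤ)) ≤ (2:ℝ)^(-(J:ℤ)) := by
      apply zpow_le_zpow_right₀ one_le_two; omega
    linarith
  · have hcast1 : (-(((j:ℕ)+1 : ℕ):ℤ)) = -(j:ℤ)-1 := by push_cast; ring
    have hid : ∀ x : ℝ, 0 < x → x * x^(-((j+1:ℕ):ℤ)) = x^(-(j:ℤ)) := by
      intro x hx
      rw [hcast1, zpow_sub₀ hx.ne', zpow_one]
      field_simp
    have hid2 : (2:ℝ) * (2:ℝ)^(-((j+1:ℕ):ℤ)) = (2:ℝ)^(-(j:ℤ)) := hid 2 two_pos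
    have hidπ : (2*π) * (2*π)^(-((j+1:ℕ):ℤ)) = (2*π)^(-(j:ℤ)) := hid _ h2π
    have hσ'pos : (0:ℝ) < (2*π)^(-((j+1:ℕ):ℤ)) := zpow_pos h2π _
    have hsep' : ∀ a b : ℝ, a + σ = b →
        a + 3 * ((2*π)^(-((j+1:ℕ):ℤ)) * (π/6)) ≤ b := by
      intro a b hab
      have h3 : 3 * ((2*π)^(-((j+1:ℕ):ℤ)) * (π/6)) ≤ σ := by
        have h32 : (3:ℝ) ≤ 2*π := by linarith
        have hnn : (0:ℝ) ≤ (2*π)^(-((j+1:ℕ):ℤ)) * (π/6) := by positivity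
        calc 3 * ((2*π)^(-((j+1:ℕ):ℤ)) * (π/6))
            ≤ (2*π) * ((2*π)^(-((j+1:ℕ):ℤ)) * (π/6)) :=
              mul_le_mul_of_nonneg_right h32 hnn
          _ = σ := by rw [hσdef, ← hidπ]; ring
      linarith
    have hv01 : vv 0 + σ = vv 1 := by rw [hvvc, hvvc]; push_cast; ring
    have hv12 : vv 1 + σ = vv 2 := by rw [hvvc, hvvc]; push_cast; ring
    have hnorm : ∀ τ : ℝ, ‖γ τ‖ < (2:ℝ)^(-(j:ℤ)) →
        ‖γ τ‖ < 2 * (2:ℝ)^(-((j+1:ℕ):ℤ)) := by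
      intro τ h; rw [hid2]; exact h
    have hq14 : ∀ i : ℕ, i ≤ 2 → θ p ≤ vv i ∧ vv i ≤ 1/4 := fun i hi =>
      ⟨hvlb i, (hvmono i 2 hi).trans ((hvub 2 (by norm_num)).trans hθq)⟩
    have r1 := hIH τ0 τ1 (hsub hτ0m) (hsub hτ1m) hτ01
      (by rw [hτ0v]; exact hθp.trans (hvlb 0))
      (by rw [hτ1v]; exact (hq14 1 (by norm_num)).2)
      (by rw [hτ0v, hτ1v]; exact hsep' _ _ hv01)
      (hnorm τ0 hlow0) (hnorm τ1 hlow1)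
    have r2 := hIH τ1 τ2 (hsub hτ1m) (hsub hτ2m) hτ12
      (by rw [hτ1v]; exact hθp.trans (hvlb 1))
      (by rw [hτ2v]; exact (hq14 2 (by norm_num)).2)
      (by rw [hτ1v, hτ2v]; exact hsep' _ _ hv12)
      (hnorm τ1 hlow1) (hnorm τ2 hlow2)
    calc ENNReal.ofReal (18 * (2:ℝ)^(-(j:ℤ)))
        = ENNReal.ofReal (18 * (2:ℝ)^(-((j+1:ℕ):ℤ)) + 18 * (2:ℝ)^(-((j+1:ℕ):ℤ))) := by
          rw [← hid2]; ring_nf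
      _ ≤ ENNReal.ofReal (18 * (2:ℝ)^(-((j+1:ℕ):ℤ))) +
            ENNReal.ofReal (18 * (2:ℝ)^(-((j+1:ℕ):ℤ))) := ENNReal.ofReal_add_le
      _ ≤ eVariationOn γ (Icc τ0 τ1) + eVariationOn γ (Icc τ1 τ2) := add_le_add r1 r2
      _ ≤ eVariationOn γ (Icc τ0 τ2) := stmt6_split_bound γ hτ01 hτ12
      _ ≤ eVariationOn γ (Icc p q) :=
          eVariationOn.mono γ (Icc_subset_Icc hτ0m.1 hτ2m.2)

private lemma stmt6_gap_all (γ : ℝ → EuclideanSpace ℝ (Fin 2)) (θ : ℝ → ℝ) (J : ℕ)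
    (hθ : ContinuousOn θ (Icc 0 1))
    (hEvent : ∀ t ∈ Icc (0:ℝ) 1, ∀ j k : ℕ, 2 ≤ j → 1 ≤ k →
      θ t = (k : ℝ) * (2*π)^(-(j:ℤ)) * (π/6) → θ t ≤ 1/4 →
      ‖γ t‖ < (2:ℝ)^(-(j:ℤ)) ∨ 11 * (2:ℝ)^(-(j:ℤ)) < ‖γ t‖)
    (hJ : ∀ t ∈ Icc (0:ℝ) 1, (2:ℝ)^(-(J:ℤ)) ≤ ‖γ t‖) :
    ∀ d j : ℕ, 2 ≤ j → J ≤ j + d → GapStmt γ θ j := by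
  intro d
  induction d with
  | zero =>
    intro j hj hJd
    exact stmt6_gap_step γ θ J hθ hEvent hJ j hj (Or.inl (by omega))
  | succ d IH =>
    intro j hj hJd
    exact stmt6_gap_step γ θ J hθ hEvent hJ j hj
      (Or.inr (IH (j+1) (by omega) (by omega)))

end Stmt6Aux

theorem stmt6 (A D : EuclideanSpace ℝ (Fin 2)) (hA : ‖A‖ = 1) (hD : ‖D‖ = 1)
    (hAD : InnerProductGeometry.angle A D = π / 6)
    (γ : ℝ → EuclideanSpace ℝ (Fin 2)) (hγ : ContinuousOn γ (Icc 0 1))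
    (h0 : γ 0 = A) (h1 : γ 1 = D)
    (hint : ∀ t ∈ Ioo (0:ℝ) 1,
      γ t ∈ interior (convexHull ℝ {0, (4:ℝ) • A, (4:ℝ) • D}))
    (havoid : ∀ t ∈ Icc (0:ℝ) 1, ∀ j : ℕ, 1 ≤ j → ∀ k : ℕ, 1 ≤ k →
      k ≤ ⌊(2 * π) ^ j⌋₊ →
      ¬ (γ t ∈ convexHull ℝ {0, (6:ℝ) • A, (6:ℝ) • D} ∧
          InnerProductGeometry.angle A (γ t) = k * (2 * π) ^ (-(j:ℤ)) * (π / 6) ∧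
          ‖γ t‖ ∈ Icc ((2:ℝ) ^ (-(j:ℤ))) ((11:ℝ) * 2 ^ (-(j:ℤ))))) :
    ENNReal.ofReal 6 ≤ eVariationOn γ (Icc (0:ℝ) 1) := by
  classical
  have hπ : (3.14:ℝ) < π := by have := Real.pi_gt_d6; linarith
  have hA0 : A ≠ 0 := by intro h; rw [h] at hA; simp at hA
  have hD0 : D ≠ 0 := by intro h; rw [h] at hD; simp at hD
  -- inner-product / convexity facts
  have hADin : @inner ℝ _ _ A D = Real.cos (π/6) := by
    have h := InnerProductGeometry.cos_angle A D
    rw [hAD, hA, hD] at h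
    rw [mul_one, div_one] at h
    linarith
  have hADnn : 0 ≤ @inner ℝ _ _ A D := by
    rw [hADin]
    apply Real.cos_nonneg_of_mem_Icc
    constructor <;> nlinarith
  have h1in : @inner ℝ _ _ A A = 1 := by
    rw [real_inner_self_eq_norm_sq, hA]; norm_num
  have h2in : @inner ℝ _ _ D D = 1 := by
    rw [real_inner_self_eq_norm_sq, hD]; norm_num
  have hDA : @inner ℝ _ _ D A = @inner ℝ _ _ A D := real_inner_comm _ _
  set w : EuclideanSpace ℝ (Fin 2) := A + D with hw
  have hww : @inner ℝ _ _ w w = 2 + 2 * @inner ℝ _ _ A D := by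
    rw [hw, inner_add_left, inner_add_right, inner_add_right, hDA, h1in, h2in]; ring
  have hwApos : 0 ≤ @inner ℝ _ _ w ((4:ℝ) • A) := by
    rw [real_inner_smul_right, hw, inner_add_left, hDA, h1in]; nlinarith
  have hwDpos : 0 ≤ @inner ℝ _ _ w ((4:ℝ) • D) := by
    rw [real_inner_smul_right, hw, inner_add_left, h2in]; nlinarith
  have hHSconv : Convex ℝ {x : EuclideanSpace ℝ (Fin 2) | 0 ≤ @inner ℝ _ _ w x} := by
    intro x hx y hy a b ha hb hab
    simp only [Set.mem_setOf_eq] at *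
    rw [inner_add_right, real_inner_smul_right, real_inner_smul_right]
    nlinarith
  have hhull : convexHull ℝ {(0:EuclideanSpace ℝ (Fin 2)), (4:ℝ) • A, (4:ℝ) • D}
      ⊆ {x : EuclideanSpace ℝ (Fin 2) | 0 ≤ @inner ℝ _ _ w x} := by
    apply convexHull_min _ hHSconv
    intro x hx
    rcases hx with h | h | h <;> subst h
    · simp
    · exact hwApos
    · exact hwDpos
  have hno : (0:EuclideanSpace ℝ (Fin 2)) ∉
      interior (convexHull ℝ {(0:EuclideanSpace ℝ (Fin 2)), (4:ℝ) • A, (4:ℝ) • D}) := by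
    intro h0i
    rw [mem_interior_iff_mem_nhds, Metric.mem_nhds_iff] at h0i
    obtain ⟨ε, hε, hball⟩ := h0i
    have hwwpos : (0:ℝ) < @inner ℝ _ _ w w := by rw [hww]; nlinarith
    have hwn : (0:ℝ) < ‖w‖ := by
      rcases eq_or_ne w 0 with h | h
      · rw [h] at hwwpos; simp at hwwpos
      · exact norm_pos_iff.mpr h
    set x : EuclideanSpace ℝ (Fin 2) := (-(ε/(2*‖w‖))) • w with hx
    have hxb : x ∈ Metric.ball (0:EuclideanSpace ℝ (Fin 2)) ε := by
      rw [mem_ball_zero_iff, hx, norm_smul]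
      rw [Real.norm_eq_abs, abs_neg, abs_of_pos (by positivity)]
      have heq : ε / (2 * ‖w‖) * ‖w‖ = ε / 2 := by field_simp
      rw [heq]; linarith
    have hmem := hhull (hball hxb)
    simp only [Set.mem_setOf_eq, hx, real_inner_smul_right] at hmem
    have : (0:ℝ) < ε / (2 * ‖w‖) * @inner ℝ _ _ w w :=
      mul_pos (div_pos hε (by positivity)) hwwpos
    nlinarith
  -- the 4-triangle is inside the 6-triangle and inside the ball of radius 4
  have hull46 : convexHull ℝ {(0:EuclideanSpace ℝ (Fin 2)), (4:ℝ) • A, (4:ℝ) • D}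
      ⊆ convexHull ℝ {(0:EuclideanSpace ℝ (Fin 2)), (6:ℝ) • A, (6:ℝ) • D} := by
    apply convexHull_min _ (convex_convexHull ℝ _)
    have m0 : (0:EuclideanSpace ℝ (Fin 2)) ∈
        convexHull ℝ {(0:EuclideanSpace ℝ (Fin 2)), (6:ℝ) • A, (6:ℝ) • D} :=
      subset_convexHull ℝ _ (by simp)
    have mA : (6:ℝ) • A ∈
        convexHull ℝ {(0:EuclideanSpace ℝ (Fin 2)), (6:ℝ) • A, (6:ℝ) • D} :=
      subset_convexHull ℝ _ (by simp)
    have mD : (6:ℝ) • D ∈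
        convexHull ℝ {(0:EuclideanSpace ℝ (Fin 2)), (6:ℝ) • A, (6:ℝ) • D} :=
      subset_convexHull ℝ _ (by simp)
    have hc := convex_convexHull ℝ ({(0:EuclideanSpace ℝ (Fin 2)), (6:ℝ) • A, (6:ℝ) • D})
    intro x hx
    rcases hx with h | h | h <;> subst h
    · exact m0
    · have h23 := hc mA m0 (by norm_num : (0:ℝ) ≤ 2/3) (by norm_num : (0:ℝ) ≤ 1/3)
        (by norm_num)
      have : ((2:ℝ)/3) • ((6:ℝ) • A) + ((1:ℝ)/3) • (0:EuclideanSpace ℝ (Fin 2))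
          = (4:ℝ) • A := by
        rw [smul_zero, add_zero, smul_smul]; norm_num
      rwa [this] at h23
    · have h23 := hc mD m0 (by norm_num : (0:ℝ) ≤ 2/3) (by norm_num : (0:ℝ) ≤ 1/3)
        (by norm_num)
      have : ((2:ℝ)/3) • ((6:ℝ) • D) + ((1:ℝ)/3) • (0:EuclideanSpace ℝ (Fin 2))
          = (4:ℝ) • D := by
        rw [smul_zero, add_zero, smul_smul]; norm_num
      rwa [this] at h23
  have hball4 : convexHull ℝ {(0:EuclideanSpace ℝ (Fin 2)), (4:ℝ) • A, (4:ℝ) • D}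
      ⊆ Metric.closedBall (0:EuclideanSpace ℝ (Fin 2)) 4 := by
    apply convexHull_min _ (convex_closedBall _ _)
    intro x hx
    rcases hx with h | h | h <;> subst h <;> rw [Metric.mem_closedBall, dist_zero_right]
    · simp
    · rw [norm_smul, Real.norm_eq_abs, hA]; norm_num
    · rw [norm_smul, Real.norm_eq_abs, hD]; norm_num
  -- the curve never passes through the origin
  have hγne : ∀ t ∈ Icc (0:ℝ) 1, γ t ≠ 0 := by
    intro t ht hzero
    rcases eq_or_ne t 0 with rfl | ht0
    · rw [h0] at hzero; exact hA0 hzero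
    rcases eq_or_ne t 1 with rfl | ht1
    · rw [h1] at hzero; exact hD0 hzero
    have hmem := hint t ⟨lt_of_le_of_ne ht.1 (Ne.symm ht0), lt_of_le_of_ne ht.2 ht1⟩
    rw [hzero] at hmem
    exact hno hmem
  -- the angle function
  set θ : ℝ → ℝ := fun t => InnerProductGeometry.angle A (γ t) with hθdef
  have hθcont : ContinuousOn θ (Icc 0 1) := by
    intro t ht
    have hca := InnerProductGeometry.continuousAt_angle (x := (A, γ t)) hA0 (hγne t ht)
    have hg : ContinuousWithinAt (fun s : ℝ => (A, γ s)) (Icc 0 1) t :=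
      ContinuousWithinAt.prodMk continuousWithinAt_const (hγ t ht)
    have hcomp := ContinuousAt.comp_continuousWithinAt
      (f := fun s : ℝ => (A, γ s)) (x := t) hca hg
    exact hcomp
  have hθ0 : θ 0 = 0 := by
    show InnerProductGeometry.angle A (γ 0) = 0
    rw [h0]; exact InnerProductGeometry.angle_self hA0
  have hθ1 : θ 1 = π/6 := by
    show InnerProductGeometry.angle A (γ 1) = π/6
    rw [h1]; exact hAD
  have hIoo : ∀ t ∈ Icc (0:ℝ) 1, 0 < θ t → θ t < π/6 → t ∈ Ioo (0:ℝ) 1 := by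
    intro t ht hpos hlt
    constructor
    · rcases eq_or_ne t 0 with rfl | h
      · rw [hθ0] at hpos; linarith
      · exact lt_of_le_of_ne ht.1 (Ne.symm h)
    · rcases eq_or_ne t 1 with rfl | h
      · rw [hθ1] at hlt; linarith
      · exact lt_of_le_of_ne ht.2 h
  -- events at scales j ≥ 2
  have hEvent : ∀ t ∈ Icc (0:ℝ) 1, ∀ j k : ℕ, 2 ≤ j → 1 ≤ k →
      θ t = (k : ℝ) * (2*π)^(-(j:ℤ)) * (π/6) → θ t ≤ 1/4 →
      ‖γ t‖ < (2:ℝ)^(-(j:ℤ)) ∨ 11 * (2:ℝ)^(-(j:ℤ)) < ‖γ t‖ := by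
    intro t ht j k hj hk hang hquarter
    have h2π : (0:ℝ) < 2*π := by linarith
    have hzp : (0:ℝ) < (2*π)^(-(j:ℤ)) := zpow_pos h2π _
    have hkR : (1:ℝ) ≤ (k:ℝ) := by exact_mod_cast hk
    have hpos : 0 < θ t := by
      rw [hang]
      apply mul_pos (mul_pos (by linarith : (0:ℝ) < (k:ℝ)) hzp)
      linarith
    have hlt : θ t < π/6 := by linarith
    have htIoo := hIoo t ht hpos hlt
    have h6 : γ t ∈ convexHull ℝ {(0:EuclideanSpace ℝ (Fin 2)), (6:ℝ) • A, (6:ℝ) • D} :=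
      hull46 (interior_subset (hint t htIoo))
    have hkfl : k ≤ ⌊(2*π)^j⌋₊ := by
      apply Nat.le_floor
      have hpow : (0:ℝ) < (2*π)^j := pow_pos h2π j
      have hinv : (2*π)^(-(j:ℤ)) * (2*π)^j = 1 := by
        rw [zpow_neg, zpow_natCast]
        field_simp
      have hklx : (k:ℝ) * (2*π)^(-(j:ℤ)) * (π/6) ≤ π/6 := by rw [← hang]; linarith
      have hkx1 : (k:ℝ) * (2*π)^(-(j:ℤ)) ≤ 1 := by
        have hπ6 : (0:ℝ) < π/6 := by linarith
        nlinarith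
      have h5 := mul_le_mul_of_nonneg_right hkx1 hpow.le
      rw [one_mul, mul_assoc, hinv, mul_one] at h5
      exact h5
    have hav := havoid t ht j (by omega) k hk hkfl
    by_contra hcon
    push_neg at hcon
    obtain ⟨hc1, hc2⟩ := hcon
    exact hav ⟨h6, hang, ⟨hc1, hc2⟩⟩
  -- minimal radius and bottom scale J
  obtain ⟨tm, htmm, htminOn⟩ := isCompact_Icc.exists_isMinOn
    (by norm_num : (Icc (0:ℝ) 1).Nonempty) hγ.norm
  have htmin : ∀ t ∈ Icc (0:ℝ) 1, ‖γ tm‖ ≤ ‖γ t‖ := fun t ht => htminOn ht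
  have hm : 0 < ‖γ tm‖ := norm_pos_iff.mpr (hγne tm htmm)
  obtain ⟨J, hJlt⟩ := exists_pow_lt_of_lt_one hm (by norm_num : (1:ℝ)/2 < 1)
  have hJ : ∀ t ∈ Icc (0:ℝ) 1, (2:ℝ)^(-(J:ℤ)) ≤ ‖γ t‖ := by
    intro t ht
    have hconv : (2:ℝ)^(-(J:ℤ)) = ((1:ℝ)/2)^J := by
      rw [zpow_neg, zpow_natCast, one_div, inv_pow]
    rw [hconv]
    exact le_trans hJlt.le (htmin t ht)
  -- the three scale-1 hitting times
  have hT1ex := stmt6_exists_firstHit (by norm_num : (0:ℝ) ≤ 1) hθcont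
    (v := 1/12) (by rw [hθ0]; norm_num) (by rw [hθ1]; linarith)
  have hT2ex := stmt6_exists_firstHit (by norm_num : (0:ℝ) ≤ 1) hθcont
    (v := 2/12) (by rw [hθ0]; norm_num) (by rw [hθ1]; linarith)
  have hT3ex := stmt6_exists_firstHit (by norm_num : (0:ℝ) ≤ 1) hθcont
    (v := 3/12) (by rw [hθ0]; norm_num) (by rw [hθ1]; linarith)
  obtain ⟨T1, hT1m, hT1v, hT1min⟩ := hT1ex
  obtain ⟨T2, hT2m, hT2v, hT2min⟩ := hT2ex
  obtain ⟨T3, hT3m, hT3v, hT3min⟩ := hT3ex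
  have horder : ∀ (v v' T T' : ℝ), v ≤ v' → 0 ≤ v → T' ∈ Icc (0:ℝ) 1 → θ T' = v' →
      (∀ t ∈ Icc (0:ℝ) 1, θ t = v → T ≤ t) → T ≤ T' := by
    intro v v' T T' hvv hv0 hT'm hT'v hmin
    obtain ⟨t, htm, htv⟩ := intermediate_value_Icc hT'm.1
      (hθcont.mono (Icc_subset_Icc le_rfl hT'm.2))
      (show v ∈ Icc (θ 0) (θ T') from
        ⟨by rw [hθ0]; exact hv0, by rw [hT'v]; exact hvv⟩)
    exact (hmin t ⟨htm.1, htm.2.trans hT'm.2⟩ htv).trans htm.2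
  have hT12 : T1 ≤ T2 := horder (1/12) (2/12) T1 T2 (by norm_num) (by norm_num)
    hT2m hT2v hT1min
  have hT23 : T2 ≤ T3 := horder (2/12) (3/12) T2 T3 (by norm_num) (by norm_num)
    hT3m hT3v hT2min
  -- scale-1 events: the norm is below 1/2 at the T's
  have hTnorm : ∀ (i : ℕ) (T : ℝ), 1 ≤ i → i ≤ 3 → T ∈ Icc (0:ℝ) 1 →
      θ T = (i:ℝ)/12 → ‖γ T‖ < 1/2 := by
    intro i T hi1 hi3 hTm hTv
    have hiR1 : (1:ℝ) ≤ (i:ℝ) := by exact_mod_cast hi1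
    have hiR3 : (i:ℝ) ≤ 3 := by exact_mod_cast hi3
    have hpos : 0 < θ T := by rw [hTv]; linarith
    have hlt : θ T < π/6 := by rw [hTv]; nlinarith
    have hTIoo := hIoo T hTm hpos hlt
    have h6 : γ T ∈ convexHull ℝ {(0:EuclideanSpace ℝ (Fin 2)), (6:ℝ) • A, (6:ℝ) • D} :=
      hull46 (interior_subset (hint T hTIoo))
    have h4 : ‖γ T‖ ≤ 4 := by
      have := hball4 (interior_subset (hint T hTIoo))
      rwa [Metric.mem_closedBall, dist_zero_right] at this
    have hkfl : i ≤ ⌊(2*π)^1⌋₊ := by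
      apply Nat.le_floor
      rw [pow_one]
      linarith
    have hav := havoid T hTm 1 le_rfl i hi1 hkfl
    have hang : InnerProductGeometry.angle A (γ T) = (i:ℝ) * (2*π)^(-((1:ℕ):ℤ)) * (π/6) := by
      show θ T = _
      rw [hTv]
      have hc : (-((1:ℕ):ℤ)) = (-1 : ℤ) := by norm_num
      rw [hc, zpow_neg, zpow_one]
      field_simp
      ring
    have h12 : ((2:ℝ)) ^ (-((1:ℕ):ℤ)) = 1/2 := by
      have hc : (-((1:ℕ):ℤ)) = (-1 : ℤ) := by norm_num
      rw [hc]; norm_num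
    by_contra hcon
    push_neg at hcon
    apply hav
    refine ⟨h6, hang, ?_, ?_⟩
    · rw [h12]; exact hcon
    · rw [h12]; linarith
  have hn1 : ‖γ T1‖ < 1/2 := hTnorm 1 T1 le_rfl (by norm_num) hT1m (by rw [hT1v]; norm_num)
  have hn2 : ‖γ T2‖ < 1/2 := hTnorm 2 T2 (by norm_num) (by norm_num) hT2m
    (by rw [hT2v]; norm_num)
  have hn3 : ‖γ T3‖ < 1/2 := hTnorm 3 T3 (by norm_num) (by norm_num) hT3m
    (by rw [hT3v]; norm_num)
  -- apply the multiscale gap bound at scale 2 to the two windows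
  have hgap : GapStmt γ θ 2 :=
    stmt6_gap_all γ θ J hθcont hEvent hJ J 2 (by norm_num) (by omega)
  have h2two : ((2:ℝ)) ^ (-((2:ℕ):ℤ)) = 1/4 := by
    have hc : (-((2:ℕ):ℤ)) = (-2 : ℤ) := by norm_num
    rw [hc]
    norm_num
  have hσ2 : ((2*π)) ^ (-((2:ℕ):ℤ)) * (π/6) = 1/(24*π) := by
    have hc : (-((2:ℕ):ℤ)) = (-2 : ℤ) := by norm_num
    rw [hc, zpow_neg]
    have hπ0 : π ≠ 0 := by linarith
    have h2 : ((2*π):ℝ)^(2:ℤ) = 4*π^2 := by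
      rw [show ((2:ℤ)) = ((2:ℕ):ℤ) by norm_num, zpow_natCast]
      ring
    rw [h2]
    field_simp
    ring
  have hsep12 : θ T1 + 3 * ((2*π)^(-((2:ℕ):ℤ)) * (π/6)) ≤ θ T2 := by
    rw [hT1v, hT2v, hσ2]
    rw [div_add' _ _ _ (by norm_num : (12:ℝ) ≠ 0)]
    have h8π : (0:ℝ) < 24*π := by linarith
    have : 3 * (1/(24*π)) = 1/(8*π) := by field_simp; ring
    rw [this]
    rw [div_le_div_iff₀ (by norm_num) (by norm_num)]
    have : (1:ℝ)/(8*π) ≤ 1/12 := by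
      rw [div_le_div_iff₀ (by linarith) (by norm_num)]
      linarith
    nlinarith
  have hsep23 : θ T2 + 3 * ((2*π)^(-((2:ℕ):ℤ)) * (π/6)) ≤ θ T3 := by
    rw [hT2v, hT3v, hσ2]
    have : 3 * (1/(24*π)) = 1/(8*π) := by field_simp; ring
    rw [this]
    have h1 : (1:ℝ)/(8*π) ≤ 1/12 := by
      rw [div_le_div_iff₀ (by linarith) (by norm_num)]
      linarith
    linarith
  have r1 := hgap T1 T2 hT1m hT2m hT12
    (by rw [hT1v]; norm_num)
    (by rw [hT2v]; norm_num)
    hsep12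
    (by rw [h2two]; linarith)
    (by rw [h2two]; linarith)
  have r2 := hgap T2 T3 hT2m hT3m hT23
    (by rw [hT2v]; norm_num)
    (by rw [hT3v]; norm_num)
    hsep23
    (by rw [h2two]; linarith)
    (by rw [h2two]; linarith)
  calc ENNReal.ofReal 6
      ≤ ENNReal.ofReal (18 * (2:ℝ)^(-((2:ℕ):ℤ)) + 18 * (2:ℝ)^(-((2:ℕ):ℤ))) := by
        apply ENNReal.ofReal_le_ofReal
        rw [h2two]; norm_num
    _ ≤ ENNReal.ofReal (18 * (2:ℝ)^(-((2:ℕ):ℤ))) +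
          ENNReal.ofReal (18 * (2:ℝ)^(-((2:ℕ):ℤ))) := ENNReal.ofReal_add_le
    _ ≤ eVariationOn γ (Icc T1 T2) + eVariationOn γ (Icc T2 T3) := add_le_add r1 r2
    _ ≤ eVariationOn γ (Icc T1 T3) := stmt6_split_bound γ hT12 hT23
    _ ≤ eVariationOn γ (Icc (0:ℝ) 1) :=
        eVariationOn.mono γ (Icc_subset_Icc hT1m.1 hT3m.2)
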